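/- arXiv:2504.19008 — 3 statements merged into one kernel-verified Lean document; each statement's English description precedes it below -/
import Mathlib

section
/- For the n-fold product of the unit interval with weight 1 in each coordinate, the generating function identity Σ_{i≥0} ([i+1]_q)^n t^i = (Σ_{σ ∈ S_n} t^{des(σ)} q^{maj(σ)}) / Π_{j=0}^{n} (1 − t q^j) holds (Carlitz's identity), where des(σ) is the number of descents and maj(σ) the major index of σ. -/
open PowerSeries Finset

section PS
variable {R : Type*} [CommRing R]


lemma geom_inv (r : R) : (1 - PowerSeries.C r * X) * PowerSeries.mk (fun m => r ^ m) = 1 := by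
  ext m
  rw [sub_mul, one_mul, map_sub, coeff_mk]
  cases m with
  | zero => simp
  | succ m =>
    rw [mul_assoc, mul_comm (X : R⟦X⟧), ← mul_assoc, coeff_succ_mul_X, coeff_C_mul, coeff_mk,
      coeff_one]
    simp [pow_succ, mul_comm]

lemma prod_geom (N : ℕ) (w : ℕ → R) :
    ∏ j ∈ Finset.range N, PowerSeries.mk (fun m => w j ^ m)
      = PowerSeries.mk (fun m => ∑ d ∈ Finset.Nat.antidiagonalTuple N m,
          ∏ j : Fin N, w j ^ d j) := by
  induction N with
  | zero =>
    ext m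
    cases m with
    | zero => simp [Finset.Nat.antidiagonalTuple_zero_zero]
    | succ m => simp [Finset.Nat.antidiagonalTuple_zero_succ]
  | succ N ih =>
    rw [prod_range_succ, ih]
    ext m
    rw [PowerSeries.coeff_mul, coeff_mk]
    simp only [coeff_mk]
    simp only [Finset.sum_mul]
    rw [Finset.sum_sigma']
    refine Finset.sum_nbij' (i := fun p => Fin.snoc p.2 p.1.2)
      (j := fun d => ⟨(∑ j : Fin N, d (Fin.castSucc j), d (Fin.last N)), Fin.init d⟩)
      ?_ ?_ ?_ ?_ ?_
    · rintro ⟨⟨a, b⟩, e⟩ h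
      simp only [Finset.mem_sigma, Finset.mem_antidiagonal, Finset.Nat.mem_antidiagonalTuple] at h
      rw [Finset.Nat.mem_antidiagonalTuple, Fin.sum_univ_castSucc]
      simp only [Fin.snoc_castSucc, Fin.snoc_last]
      have hab := Finset.HasAntidiagonal.mem_antidiagonal.mp h.1
      omega
    · intro d h
      rw [Finset.Nat.mem_antidiagonalTuple] at h
      simp only [Finset.mem_sigma, Finset.mem_antidiagonal, Finset.Nat.mem_antidiagonalTuple]
      refine ⟨?_, ?_⟩
      · rw [← h, Fin.sum_univ_castSucc]
        exact Finset.HasAntidiagonal.mem_antidiagonal.mpr rfl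
      · rfl
    · rintro ⟨⟨a, b⟩, e⟩ h
      simp only [Fin.init_snoc, Fin.snoc_last]
      congr 1
      · simp only [Fin.snoc_castSucc]
        simp only [Finset.mem_sigma, Finset.mem_antidiagonal,
          Finset.Nat.mem_antidiagonalTuple] at h
        rw [h.2]
    · intro d h
      exact Fin.snoc_init_self d
    · rintro ⟨⟨a, b⟩, e⟩ h
      rw [Fin.prod_univ_castSucc]
      simp [Fin.snoc_castSucc, Fin.snoc_last]

end PS


/-- The number of descents of a permutation of `{0,…,n-1}` in one-line notation. -/
def desStat {n : ℕ} (σ : Equiv.Perm (Fin n)) : ℕ :=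
  ∑ i : Fin n, if h : (i : ℕ) + 1 < n then (if σ ⟨(i : ℕ) + 1, h⟩ < σ i then 1 else 0) else 0

/-- The major index of a permutation: the sum of the (1-indexed) descent positions. -/
def majStat {n : ℕ} (σ : Equiv.Perm (Fin n)) : ℕ :=
  ∑ i : Fin n,
    if h : (i : ℕ) + 1 < n then (if σ ⟨(i : ℕ) + 1, h⟩ < σ i then (i : ℕ) + 1 else 0) else 0

variable {n : ℕ}

/-- Whether `p` is a descent position of `σ`. -/
def descB (σ : Equiv.Perm (Fin n)) (p : ℕ) : Bool :=
  if h : p + 1 < n then decide (σ ⟨p + 1, h⟩ < σ ⟨p, Nat.lt_of_succ_lt h⟩) else false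

/-- The descent set of `σ`. -/
def Dset (σ : Equiv.Perm (Fin n)) : Finset ℕ := (Finset.range n).filter (fun p => descB σ p)

/-- The number of descents of `σ` at positions `≥ j`. -/
def nu (σ : Equiv.Perm (Fin n)) (j : ℕ) : ℕ :=
  ((Dset σ).filter (fun p => j ≤ p)).card

lemma descB_iff {σ : Equiv.Perm (Fin n)} {p : ℕ} (h : p + 1 < n) :
    descB σ p = true ↔ σ ⟨p + 1, h⟩ < σ ⟨p, Nat.lt_of_succ_lt h⟩ := by
  simp [descB, h]

lemma succ_lt_of_mem_Dset {σ : Equiv.Perm (Fin n)} {p : ℕ} (h : p ∈ Dset σ) : p + 1 < n := by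
  rw [Dset, mem_filter] at h
  by_contra h2
  rw [descB, dif_neg h2] at h
  exact absurd h.2 (by simp)

lemma mem_Dset_iff {σ : Equiv.Perm (Fin n)} {p : ℕ} : p ∈ Dset σ ↔ descB σ p = true := by
  constructor
  · intro h; exact ((mem_filter.mp h)).2
  · intro h
    have hp : p + 1 < n := by
      by_contra h2; rw [descB, dif_neg h2] at h; exact absurd h (by simp)
    exact mem_filter.mpr ⟨mem_range.mpr (Nat.lt_of_succ_lt hp), h⟩

lemma dite_eq_descB (σ : Equiv.Perm (Fin n)) (c : ℕ → ℕ) (i : Fin n) :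
    (if h : (i : ℕ) + 1 < n then (if σ ⟨(i : ℕ) + 1, h⟩ < σ i then c (i : ℕ) else 0) else 0)
      = (if descB σ (i : ℕ) then c (i : ℕ) else 0) := by
  by_cases h : (i : ℕ) + 1 < n
  · rw [dif_pos h]
    have hi : σ i = σ ⟨(i : ℕ), Nat.lt_of_succ_lt h⟩ :=
      congrArg σ (Fin.eta i (Nat.lt_of_succ_lt h)).symm
    rw [hi]
    by_cases h2 : σ ⟨(i : ℕ) + 1, h⟩ < σ ⟨(i : ℕ), Nat.lt_of_succ_lt h⟩
    · rw [if_pos h2, if_pos ((descB_iff h).mpr h2)]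
    · rw [if_neg h2, if_neg (fun hc => h2 ((descB_iff h).mp hc))]
  · rw [dif_neg h, if_neg (by rw [descB, dif_neg h]; simp)]

lemma desStat_eq (σ : Equiv.Perm (Fin n)) : desStat σ = (Dset σ).card := by
  rw [Dset, card_filter, desStat]
  have : ∀ i : Fin n,
      (if h : (i : ℕ) + 1 < n then (if σ ⟨(i : ℕ) + 1, h⟩ < σ i then 1 else 0) else 0)
        = (fun p => if descB σ p then 1 else 0) (i : ℕ) :=
    fun i => dite_eq_descB σ (fun _ => 1) i
  rw [Finset.sum_congr rfl (fun i _ => this i)]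
  exact Fin.sum_univ_eq_sum_range (fun p => if descB σ p then 1 else 0) n

lemma majStat_eq (σ : Equiv.Perm (Fin n)) : majStat σ = ∑ p ∈ Dset σ, (p + 1) := by
  rw [Dset, sum_filter, majStat]
  have : ∀ i : Fin n,
      (if h : (i : ℕ) + 1 < n then (if σ ⟨(i : ℕ) + 1, h⟩ < σ i then (i : ℕ) + 1 else 0) else 0)
        = (fun p => if descB σ p then p + 1 else 0) (i : ℕ) :=
    fun i => dite_eq_descB σ (fun p => p + 1) i
  rw [Finset.sum_congr rfl (fun i _ => this i)]
  exact Fin.sum_univ_eq_sum_range (fun p => if descB σ p then p + 1 else 0) n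

lemma nu_zero (σ : Equiv.Perm (Fin n)) : nu σ 0 = desStat σ := by
  rw [nu, desStat_eq, filter_true_of_mem (fun x _ => Nat.zero_le x)]

lemma nu_anti (σ : Equiv.Perm (Fin n)) {j j' : ℕ} (h : j ≤ j') : nu σ j' ≤ nu σ j :=
  card_le_card (Finset.monotone_filter_right _ (fun x _ hx => le_trans h hx))

lemma nu_step (σ : Equiv.Perm (Fin n)) (p : ℕ) :
    nu σ p = nu σ (p + 1) + (if descB σ p then 1 else 0) := by
  rw [nu, nu]
  have hsplit : (Dset σ).filter (fun x => p ≤ x)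
      = ((Dset σ).filter (fun x => p + 1 ≤ x)) ∪ ((Dset σ).filter (fun x => x = p)) := by
    ext x
    simp only [mem_filter, mem_union]
    constructor
    · rintro ⟨hx, hp⟩
      rcases Nat.lt_or_ge x (p+1) with h1 | h1
      · exact Or.inr ⟨hx, by omega⟩
      · exact Or.inl ⟨hx, h1⟩
    · rintro (⟨hx, hp⟩ | ⟨hx, hp⟩)
      · exact ⟨hx, by omega⟩
      · exact ⟨hx, by omega⟩
  rw [hsplit, card_union_of_disjoint]
  · congr 1
    rw [Finset.filter_eq']
    by_cases h : p ∈ Dset σ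
    · rw [if_pos h, if_pos (mem_Dset_iff.mp h), card_singleton]
    · rw [if_neg h, if_neg (fun hc => h (mem_Dset_iff.mpr hc)), card_empty]
  · rw [Finset.disjoint_left]
    intro a ha hb
    rw [mem_filter] at ha hb
    omega

lemma nu_last (σ : Equiv.Perm (Fin n)) {j : ℕ} (h : n ≤ j + 1) : nu σ j = 0 := by
  rw [nu, card_eq_zero, filter_eq_empty_iff]
  intro x hx
  have := succ_lt_of_mem_Dset hx
  omega

lemma nu_le_des (σ : Equiv.Perm (Fin n)) (j : ℕ) : nu σ j ≤ desStat σ := by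
  rw [← nu_zero]; exact nu_anti σ (Nat.zero_le j)

lemma nu_sum (σ : Equiv.Perm (Fin n)) : ∑ j ∈ Finset.range n, nu σ j = majStat σ := by
  rw [majStat_eq]
  have : ∀ j, nu σ j = ∑ p ∈ Dset σ, if j ≤ p then 1 else 0 := by
    intro j; rw [nu, card_filter]
  simp_rw [this]
  rw [Finset.sum_comm]
  refine Finset.sum_congr rfl fun p hp => ?_
  have hp1 : p + 1 < n := succ_lt_of_mem_Dset hp
  have h2 : (Finset.range n).filter (fun j => j ≤ p) = Finset.range (p + 1) := by
    ext x; simp only [mem_filter, mem_range]; omega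
  rw [← Finset.card_filter, h2, Finset.card_range]



/-- Telescoping sum for an antitone `H`. -/
lemma tele_sum (H : ℕ → ℕ) (Hanti : ∀ j, H (j + 1) ≤ H j) :
    ∀ a b, a ≤ b → ∑ k ∈ Finset.Ico a b, (H k - H (k + 1)) = H a - H b := by
  have Hanti' : ∀ j k, j ≤ k → H k ≤ H j := by
    intro j k h
    induction k with
    | zero =>
      have : j = 0 := by omega
      subst this; exact le_refl _
    | succ k ih =>
      rcases Nat.lt_or_ge j (k + 1) with h1 | h1
      · exact le_trans (Hanti k) (ih (by omega))
      · have : j = k + 1 := by omega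
        subst this; exact le_refl _
  intro a b hab
  induction b with
  | zero =>
    have : a = 0 := by omega
    subst this; simp
  | succ b ih =>
    rcases Nat.lt_or_ge a (b + 1) with h1 | h1
    · rw [Finset.sum_Ico_succ_top (by omega), ih (by omega)]
      have h2 := Hanti b
      have h3 := Hanti' a b (by omega)
      omega
    · have : a = b + 1 := by omega
      subst this; simp

/-- Abel summation for an antitone `H`. -/
lemma abel_sum (H : ℕ → ℕ) (Hanti : ∀ j, H (j + 1) ≤ H j) (N : ℕ) :
    (∑ k ∈ Finset.range N, (k + 1) * (H k - H (k + 1))) + N * H N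
      = ∑ j ∈ Finset.range N, H j := by
  induction N with
  | zero => simp
  | succ N ih =>
    calc (∑ k ∈ Finset.range (N + 1), (k + 1) * (H k - H (k + 1))) + (N + 1) * H (N + 1)
        = (∑ k ∈ Finset.range N, (k + 1) * (H k - H (k + 1)))
            + ((N + 1) * (H N - H (N + 1)) + (N + 1) * H (N + 1)) := by
          rw [Finset.sum_range_succ]; ring
      _ = (∑ k ∈ Finset.range N, (k + 1) * (H k - H (k + 1))) + (N + 1) * H N := by
          rw [← Nat.mul_add, Nat.sub_add_cancel (Hanti N)]
      _ = ((∑ k ∈ Finset.range N, (k + 1) * (H k - H (k + 1))) + N * H N) + H N := by ring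
      _ = (∑ j ∈ Finset.range N, H j) + H N := by rw [ih]
      _ = ∑ j ∈ Finset.range (N + 1), H j := (Finset.sum_range_succ H N).symm

section Sorted
variable {n : ℕ}

variable {i : ℕ} {f : Fin n → ℕ} {σ : Equiv.Perm (Fin n)}

lemma sorted_anti (hf : ∀ x, f x ≤ i) (hσ : σ = Tuple.sort (fun x => i - f x))
    {p : ℕ} (h : p + 1 < n) :
    f (σ ⟨p + 1, h⟩) ≤ f (σ ⟨p, Nat.lt_of_succ_lt h⟩) := by
  have hm : Monotone ((fun x => i - f x) ∘ σ) := by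
    rw [hσ]; exact Tuple.monotone_sort _
  have hkey := hm (show (⟨p, Nat.lt_of_succ_lt h⟩ : Fin n) ≤ ⟨p + 1, h⟩ by
    simp [Fin.le_def])
  simp only [Function.comp_apply] at hkey
  have h1 := hf (σ ⟨p + 1, h⟩)
  have h2 := hf (σ ⟨p, Nat.lt_of_succ_lt h⟩)
  omega

lemma sorted_strict (hf : ∀ x, f x ≤ i) (hσ : σ = Tuple.sort (fun x => i - f x))
    {p : ℕ} (h : p + 1 < n) (hd : σ ⟨p + 1, h⟩ < σ ⟨p, Nat.lt_of_succ_lt h⟩) :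
    f (σ ⟨p + 1, h⟩) < f (σ ⟨p, Nat.lt_of_succ_lt h⟩) := by
  have hle := sorted_anti hf hσ h
  rcases lt_or_eq_of_le hle with h1 | h1
  · exact h1
  · exfalso
    have hkey : (fun x => i - f x) (σ ⟨p, Nat.lt_of_succ_lt h⟩)
        = (fun x => i - f x) (σ ⟨p + 1, h⟩) := by simp only []; omega
    have htb := (Tuple.eq_sort_iff.mp hσ).2 ⟨p, Nat.lt_of_succ_lt h⟩ ⟨p + 1, h⟩
      (by simp [Fin.lt_def]) hkey
    exact absurd hd (asymm htb)

lemma nu_le_f (hf : ∀ x, f x ≤ i) (hσ : σ = Tuple.sort (fun x => i - f x)) :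
    ∀ m p (h : p < n), n - p ≤ m → nu σ p ≤ f (σ ⟨p, h⟩) := by
  intro m
  induction m with
  | zero => intro p h hm; omega
  | succ m ih =>
    intro p h hm
    by_cases h2 : p + 1 < n
    · have hstep := nu_step σ p
      have hih := ih (p + 1) h2 (by omega)
      by_cases hd : descB σ p = true
      · have := sorted_strict hf hσ h2 ((descB_iff h2).mp hd)
        rw [hd] at hstep
        simp at hstep
        omega
      · have := sorted_anti hf hσ h2
        rw [Bool.not_eq_true] at hd
        rw [hd] at hstep
        simp at hstep
        omega
    · rw [nu_last σ (by omega)]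
      omega

end Sorted

def Gf (f : Fin n → ℕ) (σ : Equiv.Perm (Fin n)) (j : ℕ) : ℕ :=
  if h : j < n then f (σ ⟨j, h⟩) - nu σ j else 0

noncomputable def dOf (i : ℕ) (f : Fin n → ℕ) (σ : Equiv.Perm (Fin n)) (k : Fin (n + 1)) : ℕ :=
  if (k : ℕ) = 0 then (i - desStat σ) - Gf f σ 0
  else Gf f σ ((k : ℕ) - 1) - Gf f σ (k : ℕ)

def dNat (d : Fin (n + 1) → ℕ) (k : ℕ) : ℕ := if h : k < n + 1 then d ⟨k, h⟩ else 0

def GD (d : Fin (n + 1) → ℕ) (j : ℕ) : ℕ := ∑ k ∈ Finset.Ico j n, dNat d (k + 1)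

def Psi (σ : Equiv.Perm (Fin n)) (d : Fin (n + 1) → ℕ) (x : Fin n) : ℕ :=
  GD d ((σ⁻¹ x : Fin n) : ℕ) + nu σ ((σ⁻¹ x : Fin n) : ℕ)

section Ctx
variable {i : ℕ} {f : Fin n → ℕ} {σ : Equiv.Perm (Fin n)}

lemma nu_le_f' (hf : ∀ x, f x ≤ i) (hσ : σ = Tuple.sort (fun x => i - f x))
    {j : ℕ} (h : j < n) : nu σ j ≤ f (σ ⟨j, h⟩) :=
  nu_le_f hf hσ n j h (by omega)

lemma Gf_zero_of_ge {j : ℕ} (h : n ≤ j) : Gf f σ j = 0 := by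
  rw [Gf, dif_neg (by omega)]

lemma Gf_anti_step (hf : ∀ x, f x ≤ i) (hσ : σ = Tuple.sort (fun x => i - f x))
    (j : ℕ) : Gf f σ (j + 1) ≤ Gf f σ j := by
  by_cases h : j + 1 < n
  · rw [Gf, Gf, dif_pos h, dif_pos (Nat.lt_of_succ_lt h)]
    have hstep := nu_step σ j
    have h1 := nu_le_f' hf hσ h
    have h2 := nu_le_f' hf hσ (Nat.lt_of_succ_lt h)
    by_cases hd : descB σ j = true
    · have := sorted_strict hf hσ h ((descB_iff h).mp hd)
      rw [hd] at hstep; simp at hstep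
      omega
    · have := sorted_anti hf hσ h
      rw [Bool.not_eq_true] at hd
      rw [hd] at hstep; simp at hstep
      omega
  · rw [Gf_zero_of_ge (by omega)]
    omega

lemma des_le_i (hf : ∀ x, f x ≤ i) (hσ : σ = Tuple.sort (fun x => i - f x)) :
    desStat σ ≤ i := by
  rcases Nat.eq_zero_or_pos n with h | h
  · rw [← nu_zero, nu_last σ (by omega)]
    omega
  · have h1 := nu_le_f' hf hσ h
    have h2 := hf (σ ⟨0, h⟩)
    rw [← nu_zero]
    omega

lemma G0_le (hf : ∀ x, f x ≤ i) (hσ : σ = Tuple.sort (fun x => i - f x)) :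
    Gf f σ 0 ≤ i - desStat σ := by
  rcases Nat.eq_zero_or_pos n with h | h
  · rw [Gf_zero_of_ge (by omega)]; omega
  · rw [Gf, dif_pos h, nu_zero]
    have h2 := hf (σ ⟨0, h⟩)
    omega

-- GD / dNat basics
lemma sum_d_eq (d : Fin (n + 1) → ℕ) :
    ∑ k : Fin (n + 1), d k = dNat d 0 + GD d 0 := by
  rw [Fin.sum_univ_succ, GD]
  refine congrArg₂ (· + ·) ?_ ?_
  · simp only [dNat]
    rw [dif_pos (Nat.succ_pos n)]
    exact congrArg d (Fin.ext (by simp))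
  · rw [← Finset.range_eq_Ico]
    have : ∀ k : Fin n, d k.succ = (fun p => dNat d (p + 1)) (k : ℕ) := by
      intro k
      simp only [dNat]
      rw [dif_pos (by omega)]
      exact congrArg d (Fin.ext rfl)
    rw [Finset.sum_congr rfl (fun k _ => this k)]
    exact Fin.sum_univ_eq_sum_range (fun p => dNat d (p + 1)) n

lemma weight_d_eq (d : Fin (n + 1) → ℕ) :
    ∑ k : Fin (n + 1), (k : ℕ) * d k = ∑ k ∈ Finset.range n, (k + 1) * dNat d (k + 1) := by
  rw [Fin.sum_univ_succ]
  simp only [Fin.val_zero, zero_mul, zero_add]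
  have : ∀ k : Fin n, ((k.succ : Fin (n+1)) : ℕ) * d k.succ
      = (fun p => (p + 1) * dNat d (p + 1)) (k : ℕ) := by
    intro k
    simp only [Fin.val_succ]
    congr 1
    simp only [dNat]
    rw [dif_pos (by omega)]
    exact congrArg d (Fin.ext rfl)
  rw [Finset.sum_congr rfl (fun k _ => this k)]
  exact Fin.sum_univ_eq_sum_range (fun p => (p + 1) * dNat d (p + 1)) n

lemma GD_anti (d : Fin (n + 1) → ℕ) {j j' : ℕ} (h : j ≤ j') : GD d j' ≤ GD d j :=
  Finset.sum_le_sum_of_subset (Finset.Ico_subset_Ico h le_rfl)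

lemma GD_succ (d : Fin (n + 1) → ℕ) {j : ℕ} (h : j < n) :
    GD d j = dNat d (j + 1) + GD d (j + 1) := by
  rw [GD, GD, Finset.sum_eq_sum_Ico_succ_bot h]

lemma GD_last (d : Fin (n + 1) → ℕ) {j : ℕ} (h : n ≤ j) : GD d j = 0 := by
  rw [GD, Finset.Ico_eq_empty (by omega), Finset.sum_empty]

-- forward facts
lemma dNat_dOf {k : ℕ} (h : k < n) :
    dNat (dOf i f σ) (k + 1) = Gf f σ k - Gf f σ (k + 1) := by
  simp only [dNat]
  rw [dif_pos (by omega)]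
  simp only [dOf]
  simp

lemma GD_dOf (hf : ∀ x, f x ≤ i) (hσ : σ = Tuple.sort (fun x => i - f x)) (j : ℕ) :
    GD (dOf i f σ) j = Gf f σ j := by
  rcases Nat.lt_or_ge j n with h | h
  · rw [GD]
    rw [Finset.sum_congr rfl (fun k hk => dNat_dOf (Finset.mem_Ico.mp hk).2)]
    rw [tele_sum (Gf f σ) (Gf_anti_step hf hσ) j n (by omega),
      Gf_zero_of_ge le_rfl, Nat.sub_zero]
  · rw [GD_last _ h, Gf_zero_of_ge h]

lemma sum_dOf (hf : ∀ x, f x ≤ i) (hσ : σ = Tuple.sort (fun x => i - f x)) :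
    ∑ k : Fin (n + 1), dOf i f σ k = i - desStat σ := by
  rw [sum_d_eq, GD_dOf hf hσ]
  have h0 : dNat (dOf i f σ) 0 = (i - desStat σ) - Gf f σ 0 := by
    simp only [dNat]
    rw [dif_pos (Nat.succ_pos n)]
    simp only [dOf]
    simp
  rw [h0]
  have := G0_le hf hσ
  omega

lemma weight_dOf (hf : ∀ x, f x ≤ i) (hσ : σ = Tuple.sort (fun x => i - f x)) :
    majStat σ + ∑ k : Fin (n + 1), (k : ℕ) * dOf i f σ k = ∑ x, f x := by
  rw [weight_d_eq]
  rw [Finset.sum_congr rfl (fun k hk => by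
    rw [dNat_dOf (Finset.mem_range.mp hk)])]
  have habel := abel_sum (Gf f σ) (Gf_anti_step hf hσ) n
  rw [Gf_zero_of_ge le_rfl, Nat.mul_zero, Nat.add_zero] at habel
  rw [habel]
  -- now: majStat σ + ∑ j ∈ range n, Gf f σ j = ∑ x, f x
  have hpt : ∀ j ∈ Finset.range n, Gf f σ j + nu σ j
      = (fun p => if h : p < n then f (σ ⟨p, h⟩) else 0) j := by
    intro j hj
    have hj' := Finset.mem_range.mp hj
    show _ = if h : j < n then f (σ ⟨j, h⟩) else 0
    rw [Gf, dif_pos hj', dif_pos hj']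
    have := nu_le_f' hf hσ hj'
    omega
  have hsum : (∑ j ∈ Finset.range n, Gf f σ j) + (∑ j ∈ Finset.range n, nu σ j)
      = ∑ j ∈ Finset.range n, (fun p => if h : p < n then f (σ ⟨p, h⟩) else 0) j := by
    rw [← Finset.sum_add_distrib]
    exact Finset.sum_congr rfl hpt
  have hF : ∑ j ∈ Finset.range n, (fun p => if h : p < n then f (σ ⟨p, h⟩) else 0) j
      = ∑ x, f x := by
    rw [← Fin.sum_univ_eq_sum_range (fun p => if h : p < n then f (σ ⟨p, h⟩) else 0) n]
    rw [← Equiv.sum_comp σ f]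
    refine Finset.sum_congr rfl fun k _ => ?_
    show (if h : (k : ℕ) < n then f (σ ⟨(k : ℕ), h⟩) else 0) = f (σ k)
    rw [dif_pos k.isLt]
  rw [nu_sum] at hsum
  omega

-- inverse-side facts
lemma V_anti {i : ℕ} (σ : Equiv.Perm (Fin n)) (d : Fin (n + 1) → ℕ) {j j' : ℕ} (h : j ≤ j') :
    GD d j' + nu σ j' ≤ GD d j + nu σ j :=
  Nat.add_le_add (GD_anti d h) (nu_anti σ h)

lemma V_le {i : ℕ} {σ : Equiv.Perm (Fin n)} {d : Fin (n + 1) → ℕ}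
    (hd : ∑ k : Fin (n + 1), d k = i - desStat σ) (hdes : desStat σ ≤ i) (j : ℕ) :
    GD d j + nu σ j ≤ i := by
  have h1 := V_anti (i := i) σ d (Nat.zero_le j)
  have h2 : dNat d 0 + GD d 0 = i - desStat σ := by rw [← sum_d_eq]; exact hd
  have h3 := nu_zero σ
  omega

lemma Psi_apply (σ : Equiv.Perm (Fin n)) (d : Fin (n + 1) → ℕ) (j : Fin n) :
    Psi σ d (σ j) = GD d (j : ℕ) + nu σ (j : ℕ) := by
  rw [Psi, show σ⁻¹ (σ j) = j from σ.symm_apply_apply j]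

lemma sort_Psi {i : ℕ} {σ : Equiv.Perm (Fin n)} {d : Fin (n + 1) → ℕ}
    (hd : ∑ k : Fin (n + 1), d k = i - desStat σ) (hdes : desStat σ ≤ i) :
    σ = Tuple.sort (fun x => i - Psi σ d x) := by
  rw [Tuple.eq_sort_iff]
  constructor
  · intro a b hab
    show i - Psi σ d (σ a) ≤ i - Psi σ d (σ b)
    rw [Psi_apply, Psi_apply]
    have h1 := V_anti (i := i) σ d (show (a : ℕ) ≤ (b : ℕ) from hab)
    have h2 := V_le hd hdes (a : ℕ)
    have h3 := V_le hd hdes (b : ℕ)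
    omega
  · intro a b hab hkey
    simp only [Psi_apply] at hkey
    have h2 := V_le hd hdes (a : ℕ)
    have h3 := V_le hd hdes (b : ℕ)
    have hV : GD d (a : ℕ) + nu σ (a : ℕ) = GD d (b : ℕ) + nu σ (b : ℕ) := by omega
    have hablt : (a : ℕ) < (b : ℕ) := hab
    have step : ∀ p (hp1 : (a : ℕ) ≤ p) (hp2 : p + 1 ≤ (b : ℕ)),
        σ ⟨p, by have := b.isLt; omega⟩ < σ ⟨p + 1, by have := b.isLt; omega⟩ := by
      intro p hp1 hp2
      have hpb : p + 1 < n := by have := b.isLt; omega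
      have hVp : GD d p + nu σ p = GD d (p + 1) + nu σ (p + 1) := by
        have k1 := V_anti (i := i) σ d hp1
        have k2 := V_anti (i := i) σ d (show p ≤ p + 1 by omega)
        have k3 := V_anti (i := i) σ d hp2
        omega
      have hnu : nu σ p = nu σ (p + 1) := by
        have k1 := GD_anti d (show p ≤ p + 1 by omega)
        have k2 := nu_anti σ (show p ≤ p + 1 by omega)
        omega
      have hdB : ¬ (descB σ p = true) := by
        intro hc
        have := nu_step σ p
        rw [hc] at this; simp at this; omega
      have hne : σ ⟨p, Nat.lt_of_succ_lt hpb⟩ ≠ σ ⟨p + 1, hpb⟩ := by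
        intro hc
        have := σ.injective hc
        simp [Fin.ext_iff] at this
      have hnlt : ¬ (σ ⟨p + 1, hpb⟩ < σ ⟨p, Nat.lt_of_succ_lt hpb⟩) :=
        fun hc => hdB ((descB_iff hpb).mpr hc)
      rcases lt_trichotomy (σ ⟨p, Nat.lt_of_succ_lt hpb⟩) (σ ⟨p + 1, hpb⟩) with h | h | h
      · exact h
      · exact absurd h hne
      · exact absurd h hnlt
    have chain : ∀ m (hm : (a : ℕ) + m + 1 ≤ (b : ℕ)),
        σ a < σ ⟨(a : ℕ) + m + 1, by have := b.isLt; omega⟩ := by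
      intro m
      induction m with
      | zero =>
        intro hm
        have h0 := step (a : ℕ) le_rfl hm
        have : σ ⟨(a : ℕ), by have := b.isLt; omega⟩ = σ a :=
          congrArg σ (Fin.eta a _)
        rwa [this] at h0
      | succ m ih =>
        intro hm
        have h1 := ih (by omega)
        have h2 := step ((a : ℕ) + m + 1) (by omega) (by omega)
        exact lt_trans h1 h2
    obtain ⟨m, hm⟩ : ∃ m, (b : ℕ) = (a : ℕ) + m + 1 := ⟨(b : ℕ) - (a : ℕ) - 1, by omega⟩
    have hc := chain m (by omega)
    have : σ ⟨(a : ℕ) + m + 1, by have := b.isLt; omega⟩ = σ b :=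
      congrArg σ (Fin.ext hm.symm)
    rwa [this] at hc

lemma Psi_dOf (hf : ∀ x, f x ≤ i) (hσ : σ = Tuple.sort (fun x => i - f x)) :
    Psi σ (dOf i f σ) = f := by
  funext x
  rw [Psi, GD_dOf hf hσ]
  have he : σ ⟨((σ⁻¹ x : Fin n) : ℕ), (σ⁻¹ x).isLt⟩ = x := by
    rw [Fin.eta]
    exact σ.apply_symm_apply x
  rw [Gf, dif_pos (σ⁻¹ x).isLt, he]
  have hle := nu_le_f' hf hσ (σ⁻¹ x).isLt
  rw [he] at hle
  omega

lemma dOf_Psi {i : ℕ} {σ : Equiv.Perm (Fin n)} {d : Fin (n + 1) → ℕ}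
    (hd : ∑ k : Fin (n + 1), d k = i - desStat σ) (hdes : desStat σ ≤ i) :
    dOf i (Psi σ d) σ = d := by
  have hG : ∀ j, Gf (Psi σ d) σ j = GD d j := by
    intro j
    by_cases h : j < n
    · rw [Gf, dif_pos h]
      have : Psi σ d (σ ⟨j, h⟩) = GD d j + nu σ j := Psi_apply σ d ⟨j, h⟩
      rw [this]
      omega
    · rw [Gf_zero_of_ge (by omega), GD_last d (by omega)]
  funext k
  rw [dOf]
  by_cases hk : (k : ℕ) = 0
  · rw [if_pos hk, hG]
    have h2 : dNat d 0 + GD d 0 = i - desStat σ := by rw [← sum_d_eq]; exact hd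
    have h3 : dNat d 0 = d k := by
      simp only [dNat]
      rw [dif_pos (Nat.succ_pos n)]
      exact congrArg d (Fin.ext (by simp [hk]))
    omega
  · rw [if_neg hk, hG, hG]
    have hkn : (k : ℕ) - 1 < n := by have := k.isLt; omega
    have hGsucc := GD_succ d hkn
    have he : (k : ℕ) - 1 + 1 = (k : ℕ) := by omega
    rw [he] at hGsucc
    have h3 : dNat d (k : ℕ) = d k := by
      simp only [dNat]
      rw [dif_pos k.isLt]
    omega

end Ctx

lemma carlitz_core (n i : ℕ) :
    ∑ f ∈ Fintype.piFinset (fun _ : Fin n => Finset.range (i + 1)),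
        (Polynomial.X : Polynomial ℚ) ^ (∑ k, f k)
      = ∑ p ∈ (Finset.univ : Finset (Equiv.Perm (Fin n))).sigma
            (fun σ => if desStat σ ≤ i then Finset.Nat.antidiagonalTuple (n + 1) (i - desStat σ)
              else ∅),
          (Polynomial.X : Polynomial ℚ) ^ (majStat p.1 + ∑ k : Fin (n + 1), (k : ℕ) * p.2 k) := by
  refine Finset.sum_nbij'
    (i := fun f => ⟨Tuple.sort (fun x => i - f x), dOf i f (Tuple.sort (fun x => i - f x))⟩)
    (j := fun p => Psi p.1 p.2) ?_ ?_ ?_ ?_ ?_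
  · intro f hf'
    have hf : ∀ x, f x ≤ i := by
      intro x
      have := Fintype.mem_piFinset.mp hf' x
      rw [Finset.mem_range] at this
      omega
    rw [Finset.mem_sigma]
    refine ⟨Finset.mem_univ _, ?_⟩
    rw [if_pos (des_le_i hf rfl), Finset.Nat.mem_antidiagonalTuple]
    exact sum_dOf hf rfl
  · rintro ⟨σ, d⟩ hp
    dsimp only at hp ⊢
    rw [Finset.mem_sigma] at hp
    by_cases hdes : desStat σ ≤ i
    · rw [if_pos hdes, Finset.Nat.mem_antidiagonalTuple] at hp
      have hd : ∑ k : Fin (n + 1), d k = i - desStat σ := hp.2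
      rw [Fintype.mem_piFinset]
      intro x
      rw [Finset.mem_range]
      have := V_le hd hdes ((σ⁻¹ x : Fin n) : ℕ)
      simp only [Psi]
      omega
    · rw [if_neg hdes] at hp
      exact absurd hp.2 (Finset.notMem_empty _)
  · intro f hf'
    have hf : ∀ x, f x ≤ i := by
      intro x
      have := Fintype.mem_piFinset.mp hf' x
      rw [Finset.mem_range] at this
      omega
    exact Psi_dOf hf rfl
  · rintro ⟨σ, d⟩ hp
    dsimp only at hp ⊢
    rw [Finset.mem_sigma] at hp
    by_cases hdes : desStat σ ≤ i
    · rw [if_pos hdes, Finset.Nat.mem_antidiagonalTuple] at hp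
      have hd : ∑ k : Fin (n + 1), d k = i - desStat σ := hp.2
      have hs := sort_Psi hd hdes
      refine Sigma.ext hs.symm ?_
      rw [← hs]
      exact heq_of_eq (dOf_Psi hd hdes)
    · rw [if_neg hdes] at hp
      exact absurd hp.2 (Finset.notMem_empty _)
  · intro f hf'
    have hf : ∀ x, f x ≤ i := by
      intro x
      have := Fintype.mem_piFinset.mp hf' x
      rw [Finset.mem_range] at this
      omega
    congr 1
    exact (weight_dOf hf rfl).symm



/-- **Carlitz's identity.**
`∑_{i ≥ 0} ([i+1]_q)^n t^i = (∑_{σ ∈ S_n} t^{des σ} q^{maj σ}) / ∏_{j=0}^n (1 - t q^j)`,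
an identity of formal power series in `t` with coefficients in `ℚ[q]`, stated with the
denominator cleared. -/
theorem stmt_8 (n : ℕ) :
    (∏ j ∈ Finset.range (n + 1),
        (1 - PowerSeries.C ((Polynomial.X : Polynomial ℚ) ^ j) *
          PowerSeries.X)) *
      PowerSeries.mk (fun i => (∑ j ∈ Finset.range (i + 1), (Polynomial.X : Polynomial ℚ) ^ j) ^ n)
      = ∑ σ : Equiv.Perm (Fin n),
          PowerSeries.C ((Polynomial.X : Polynomial ℚ) ^ majStat σ) *
            PowerSeries.X ^ desStat σ := by
  set q : Polynomial ℚ := Polynomial.X with hq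
  set Ainv : PowerSeries (Polynomial ℚ) :=
    ∏ j ∈ Finset.range (n + 1), PowerSeries.mk (fun m => (q ^ j) ^ m) with hAinv
  have h1 : (∏ j ∈ Finset.range (n + 1),
      (1 - PowerSeries.C (q ^ j) * X)) * Ainv = 1 := by
    rw [hAinv, ← Finset.prod_mul_distrib]
    rw [Finset.prod_congr rfl (fun j _ => geom_inv (q ^ j))]
    exact Finset.prod_const_one
  have h2 : PowerSeries.mk (fun i => (∑ j ∈ Finset.range (i + 1), q ^ j) ^ n)
      = (∑ σ : Equiv.Perm (Fin n),
          PowerSeries.C (q ^ majStat σ) * PowerSeries.X ^ desStat σ) * Ainv := by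
    rw [hAinv, prod_geom]
    refine PowerSeries.ext fun i => ?_
    rw [coeff_mk, Finset.sum_mul, map_sum]
    have hterm : ∀ σ : Equiv.Perm (Fin n),
        (coeff i) (PowerSeries.C (q ^ majStat σ)
            * PowerSeries.X ^ desStat σ
            * PowerSeries.mk (fun m => ∑ d ∈ Finset.Nat.antidiagonalTuple (n + 1) m,
                ∏ j : Fin (n + 1), (q ^ (j : ℕ)) ^ d j))
          = ∑ d ∈ (if desStat σ ≤ i then Finset.Nat.antidiagonalTuple (n + 1) (i - desStat σ)
              else (∅ : Finset (Fin (n + 1) → ℕ))),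
              q ^ (majStat σ + ∑ k : Fin (n + 1), (k : ℕ) * d k) := by
      intro σ
      rw [mul_assoc, mul_comm ((PowerSeries.X : PowerSeries (Polynomial ℚ)) ^ desStat σ)]
      rw [coeff_C_mul, PowerSeries.coeff_mul_X_pow', coeff_mk]
      split_ifs with h
      · rw [Finset.mul_sum]
        refine Finset.sum_congr rfl fun d _ => ?_
        rw [pow_add]
        congr 1
        calc ∏ j : Fin (n + 1), (q ^ (j : ℕ)) ^ d j
            = ∏ j : Fin (n + 1), q ^ ((j : ℕ) * d j) :=
              Finset.prod_congr rfl fun j _ => (pow_mul q _ _).symm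
          _ = q ^ (∑ k : Fin (n + 1), (k : ℕ) * d k) :=
              Finset.prod_pow_eq_pow_sum univ _ q
      · rw [mul_zero, Finset.sum_empty]
    rw [Finset.sum_congr rfl (fun σ _ => hterm σ), Finset.sum_sigma']
    have hL : (∑ j ∈ Finset.range (i + 1), q ^ j) ^ n
        = ∑ f ∈ Fintype.piFinset (fun _ : Fin n => Finset.range (i + 1)), q ^ (∑ k, f k) := by
      rw [← Fin.prod_const n (∑ j ∈ Finset.range (i + 1), q ^ j), Finset.prod_univ_sum]
      exact Finset.sum_congr rfl fun f _ =>
        Finset.prod_pow_eq_pow_sum univ f q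
    rw [hL]
    exact carlitz_core n i
  calc (∏ j ∈ Finset.range (n + 1), (1 - PowerSeries.C (q ^ j) * PowerSeries.X)) *
        PowerSeries.mk (fun i => (∑ j ∈ Finset.range (i + 1), q ^ j) ^ n)
      = (∏ j ∈ Finset.range (n + 1), (1 - PowerSeries.C (q ^ j) * PowerSeries.X)) *
        ((∑ σ : Equiv.Perm (Fin n),
          PowerSeries.C (q ^ majStat σ) * PowerSeries.X ^ desStat σ) * Ainv) := by
        rw [← h2]
    _ = (∑ σ : Equiv.Perm (Fin n),
          PowerSeries.C (q ^ majStat σ) * PowerSeries.X ^ desStat σ) *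
        ((∏ j ∈ Finset.range (n + 1), (1 - PowerSeries.C (q ^ j) * PowerSeries.X)) * Ainv) := by
        ring
    _ = _ := by rw [h1, mul_one]
end

section
/- Let m be a positive integer and fix the cycle type partition λ of n. The expected number of fixed points statistic satisfies: (1/n!) Σ_{σ ∈ S_n} fxd(σ)^m = B(m) for all n ≥ m, where fxd(σ) is the number of fixed points of σ and B(m) is the m-th Bell number. -/
open Finset

section Aux

variable {α : Type*} [DecidableEq α] [Fintype α]

lemma aux_parts_eq_image_part (P : Finpartition (univ : Finset α)) :
    P.parts = univ.image P.part := by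
  ext t
  simp only [mem_image, mem_univ, true_and]
  constructor
  · intro ht
    obtain ⟨a, ha⟩ := P.nonempty_of_mem_parts ht
    exact ⟨a, P.part_eq_of_mem ht ha⟩
  · rintro ⟨a, rfl⟩
    exact P.part_mem.2 (mem_univ a)

lemma aux_eq_of_part_eq {P Q : Finpartition (univ : Finset α)}
    (h : ∀ a, P.part a = Q.part a) : P = Q := by
  have : P.parts = Q.parts := by
    rw [aux_parts_eq_image_part, aux_parts_eq_image_part]
    exact Finset.image_congr (fun a _ => h a)
  exact Finpartition.ext this

variable {n : ℕ}

instance kerDecidable (f : α → Fin n) : DecidableRel (Setoid.ker f).r :=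
  fun a b => inferInstanceAs (Decidable (f a = f b))

/-- The kernel finpartition of a function. -/
def kerOf (f : α → Fin n) : Finpartition (univ : Finset α) :=
  Finpartition.ofSetoid (Setoid.ker f)

lemma part_kerOf (f : α → Fin n) (a : α) :
    (kerOf f).part a = univ.filter fun b => f a = f b := by
  ext b
  rw [kerOf, Finpartition.mem_part_ofSetoid_iff_rel]
  simp [Setoid.ker, Function.onFun]

lemma kerOf_eq_of {f : α → Fin n} {P : Finpartition (univ : Finset α)}
    (h : ∀ a, P.part a = univ.filter fun b => f a = f b) : kerOf f = P :=
  aux_eq_of_part_eq fun a => (part_kerOf f a).trans (h a).symm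

lemma kerOf_iff {f : α → Fin n} {P : Finpartition (univ : Finset α)}
    (h : kerOf f = P) (a b : α) : f a = f b ↔ P.part a = P.part b := by
  subst h
  rw [part_kerOf, part_kerOf]
  constructor
  · intro hab
    apply Finset.filter_congr
    intro x _
    rw [hab]
  · intro hpq
    have hb : b ∈ univ.filter fun x => f b = f x := by simp
    rw [← hpq] at hb
    exact (Finset.mem_filter.1 hb).2

/-- The chosen representative of a part. -/
noncomputable def repOf (P : Finpartition (univ : Finset α)) (t : ↥P.parts) : α :=
  (P.nonempty_of_mem_parts t.2).choose

lemma repOf_mem (P : Finpartition (univ : Finset α)) (t : ↥P.parts) : repOf P t ∈ (t : Finset α) :=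
  (P.nonempty_of_mem_parts t.2).choose_spec

lemma part_repOf (P : Finpartition (univ : Finset α)) (t : ↥P.parts) :
    P.part (repOf P t) = (t : Finset α) :=
  P.part_eq_of_mem t.2 (repOf_mem P t)

/-- Functions with a given kernel partition correspond to embeddings of the parts. -/
noncomputable def kerFiberEquiv (P : Finpartition (univ : Finset α)) (n : ℕ) :
    {f : α → Fin n // kerOf f = P} ≃ (↥P.parts ↪ Fin n) where
  toFun f := ⟨fun t => f.1 (repOf P t), by
    intro t t' h
    have h2 : P.part (repOf P t) = P.part (repOf P t') := (kerOf_iff f.2 _ _).1 h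
    rw [part_repOf, part_repOf] at h2
    exact Subtype.ext h2⟩
  invFun e := ⟨fun a => e ⟨P.part a, P.part_mem.2 (mem_univ a)⟩, by
    apply kerOf_eq_of
    intro a
    have : ∀ b : α, (e ⟨P.part a, P.part_mem.2 (mem_univ a)⟩ =
        e ⟨P.part b, P.part_mem.2 (mem_univ b)⟩) ↔ b ∈ P.part a := by
      intro b
      rw [P.mem_part_iff_part_eq_part (mem_univ b) (mem_univ a)]
      constructor
      · intro h
        have := e.injective h
        exact (Subtype.ext_iff.1 this).symm
      · intro h
        congr 1
        exact Subtype.ext h.symm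
    ext b
    simp only [mem_filter, mem_univ, true_and]
    rw [this b]⟩
  left_inv := by
    rintro ⟨f, hf⟩
    apply Subtype.ext
    funext a
    show f (repOf P ⟨P.part a, P.part_mem.2 (mem_univ a)⟩) = f a
    rw [kerOf_iff hf]
    exact part_repOf P _
  right_inv := by
    intro e
    refine DFunLike.ext _ _ fun t => ?_
    show e ⟨P.part (repOf P t), P.part_mem.2 (mem_univ (repOf P t))⟩ = e t
    congr 1
    exact Subtype.ext (part_repOf P t)

lemma card_kerFiber (P : Finpartition (univ : Finset α)) (n : ℕ) :
    (univ.filter fun f : α → Fin n => kerOf f = P).card = n.descFactorial P.parts.card := by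
  classical
  rw [← Fintype.card_subtype]
  rw [Fintype.card_congr (kerFiberEquiv P n)]
  rw [Fintype.card_embedding_eq]
  rw [Fintype.card_coe, Fintype.card_fin]

lemma card_parts_kerOf (f : α → Fin n) :
    (kerOf f).parts.card = (univ.image f).card := by
  classical
  have hparts : (kerOf f).parts =
      (univ.image f).image fun y => univ.filter fun b => y = f b := by
    rw [kerOf]
    show univ.image (fun a => univ.filter fun b => f a = f b) = _
    rw [Finset.image_image]
    rfl
  rw [hparts]
  rw [Finset.card_image_of_injOn]
  intro y hy y' hy' hyy'
  simp only [coe_image, Set.mem_image, mem_coe, mem_univ] at hy hy'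
  obtain ⟨a, -, rfl⟩ := hy
  dsimp only at hyy'
  have ha : a ∈ univ.filter fun b => f a = f b := by simp
  rw [hyy'] at ha
  exact ((Finset.mem_filter.1 ha).2).symm

lemma card_fixing (n : ℕ) (S : Finset (Fin n)) :
    (univ.filter fun σ : Equiv.Perm (Fin n) => ∀ x ∈ S, σ x = x).card
      = (n - S.card).factorial := by
  classical
  rw [← Fintype.card_subtype]
  have e1 : {σ : Equiv.Perm (Fin n) // ∀ x ∈ S, σ x = x}
      ≃ {σ : Equiv.Perm (Fin n) // ∀ x, ¬ (x ∉ S) → σ x = x} :=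
    Equiv.subtypeEquivRight (by intro σ; simp)
  have e2 := (Equiv.Perm.subtypeEquivSubtypePerm fun x : Fin n => x ∉ S).symm
  rw [Fintype.card_congr (e1.trans e2)]
  rw [Fintype.card_perm]
  congr 1
  rw [Fintype.card_subtype_compl]
  congr 1
  · exact Fintype.card_fin n
  · exact Fintype.card_coe S

end Aux

/-- For a positive integer `m` and any `n ≥ m`, the `m`-th moment of the
number-of-fixed-points statistic on `S_n` is the `m`-th Bell number:
`(1/n!) ∑_{σ ∈ S_n} fxd(σ)^m = B(m)`, where `B(m)` is the number of set partitions of an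
`m`-element set. -/
theorem stmt_12 (m : ℕ) (hm : 0 < m) (n : ℕ) (hmn : m ≤ n) :
    (1 / n.factorial : ℚ) *
        ∑ σ : Equiv.Perm (Fin n),
          ((Finset.univ.filter fun i => σ i = i).card : ℚ) ^ m
      = Nat.card (Finpartition (Finset.univ : Finset (Fin m))) := by
  classical
  have key : ∑ σ : Equiv.Perm (Fin n), (univ.filter fun i => σ i = i).card ^ m
      = Fintype.card (Finpartition (univ : Finset (Fin m))) * n.factorial := by
    -- Step 1: expand the power as a count of functions
    have step1 : ∀ σ : Equiv.Perm (Fin n),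
        (univ.filter fun i => σ i = i).card ^ m
          = ∑ f : Fin m → Fin n, if ∀ i, σ (f i) = f i then 1 else 0 := by
      intro σ
      rw [← Finset.card_filter]
      have : (univ.filter fun f : Fin m → Fin n => ∀ i, σ (f i) = f i)
          = Fintype.piFinset fun _ : Fin m => univ.filter fun i => σ i = i := by
        ext f
        simp [Fintype.mem_piFinset]
      rw [this, Fintype.card_piFinset]
      simp
    calc ∑ σ : Equiv.Perm (Fin n), (univ.filter fun i => σ i = i).card ^ m
        = ∑ σ : Equiv.Perm (Fin n), ∑ f : Fin m → Fin n,
            if ∀ i, σ (f i) = f i then 1 else 0 := by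
          exact Finset.sum_congr rfl fun σ _ => step1 σ
      _ = ∑ f : Fin m → Fin n, ∑ σ : Equiv.Perm (Fin n),
            if ∀ i, σ (f i) = f i then 1 else 0 := Finset.sum_comm
      _ = ∑ f : Fin m → Fin n,
            (univ.filter fun σ : Equiv.Perm (Fin n) => ∀ i, σ (f i) = f i).card := by
          exact Finset.sum_congr rfl fun f _ => (Finset.card_filter _ _).symm
      _ = ∑ f : Fin m → Fin n, (n - (univ.image f).card).factorial := by
          refine Finset.sum_congr rfl fun f _ => ?_
          rw [← card_fixing n (univ.image f)]
          congr 1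
          ext σ
          simp only [mem_filter, mem_univ, true_and]
          constructor
          · intro h x hx
            obtain ⟨i, _, rfl⟩ := Finset.mem_image.1 hx
            exact h i
          · intro h i
            exact h (f i) (Finset.mem_image_of_mem f (mem_univ i))
      _ = ∑ f : Fin m → Fin n, (n - (kerOf f).parts.card).factorial := by
          refine Finset.sum_congr rfl fun f _ => ?_
          rw [card_parts_kerOf]
      _ = ∑ P : Finpartition (univ : Finset (Fin m)),
            ∑ f ∈ univ.filter fun f : Fin m → Fin n => kerOf f = P,
              (n - (kerOf f).parts.card).factorial := by
          exact (Finset.sum_fiberwise_of_maps_to (fun f _ => mem_univ _) _).symm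
      _ = ∑ P : Finpartition (univ : Finset (Fin m)), n.factorial := by
          refine Finset.sum_congr rfl fun P _ => ?_
          have : ∀ f ∈ univ.filter fun f : Fin m → Fin n => kerOf f = P,
              (n - (kerOf f).parts.card).factorial = (n - P.parts.card).factorial := by
            intro f hf
            rw [(Finset.mem_filter.1 hf).2]
          rw [Finset.sum_congr rfl this, Finset.sum_const, card_kerFiber, smul_eq_mul]
          rw [mul_comm]
          apply Nat.factorial_mul_descFactorial
          calc P.parts.card ≤ (univ : Finset (Fin m)).card := P.card_parts_le_card
            _ = m := by simp
            _ ≤ n := hmn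
      _ = Fintype.card (Finpartition (univ : Finset (Fin m))) * n.factorial := by
          rw [Finset.sum_const, Finset.card_univ, smul_eq_mul]
  have hcast : ∑ σ : Equiv.Perm (Fin n),
      ((Finset.univ.filter fun i => σ i = i).card : ℚ) ^ m
      = ((∑ σ : Equiv.Perm (Fin n), (univ.filter fun i => σ i = i).card ^ m : ℕ) : ℚ) := by
    push_cast
    rfl
  rw [hcast, key, Nat.card_eq_fintype_card]
  have hfac : (n.factorial : ℚ) ≠ 0 := Nat.cast_ne_zero.2 n.factorial_ne_zero
  push_cast
  field_simp
end

section
/- The generating function Σ_{d≥0} t^d L_d(q), where L_d(q) = Σ_{(x,y) ∈ ℤ^2, |x|+|y| ≤ d} q^{x+y}, equals the rational function (1 − t^2)(1 + t) / ((1 − qt)^2 (1 − t/q)^2). -/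
open LaurentPolynomial

/-- The refined Ehrhart polynomial of the 2-dimensional cross-polytope `Ξ₂` with weight
vector `(1,1)`: `L_d(q) = ∑_{(x,y) ∈ ℤ², |x|+|y| ≤ d} q^{x+y}`. -/
noncomputable def crossL (d : ℕ) : LaurentPolynomial ℚ :=
  ∑ v ∈ ((Finset.Icc (-(d : ℤ)) d) ×ˢ (Finset.Icc (-(d : ℤ)) d)).filter
      (fun v => v.1.natAbs + v.2.natAbs ≤ d),
    T (v.1 + v.2)

noncomputable def Aseq (m : ℕ) : LaurentPolynomial ℚ := ∑ k ∈ Finset.Icc (-(m:ℤ)) m, T k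
noncomputable def wseq (n : ℕ) : LaurentPolynomial ℚ := if n = 0 then 1 else T (n:ℤ) + T (-(n:ℤ))
noncomputable def aL : LaurentPolynomial ℚ := T 1 + T (-1)
noncomputable def Dps : PowerSeries (LaurentPolynomial ℚ) :=
  1 - PowerSeries.C aL * PowerSeries.X + PowerSeries.X ^ 2

lemma coeff_Dps_mul (f : ℕ → LaurentPolynomial ℚ) (n : ℕ) :
    PowerSeries.coeff (n + 2) (Dps * PowerSeries.mk f) =
      f (n + 2) - aL * f (n + 1) + f n := by
  have : Dps * PowerSeries.mk f =
      PowerSeries.mk f - PowerSeries.C aL * (PowerSeries.X * PowerSeries.mk f)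
        + PowerSeries.X ^ 2 * PowerSeries.mk f := by
    rw [Dps]; ring
  rw [this]
  simp [PowerSeries.coeff_C_mul, PowerSeries.coeff_succ_X_mul,
    PowerSeries.coeff_X_pow_mul]

lemma coeff_Dps_mul_one (f : ℕ → LaurentPolynomial ℚ) :
    PowerSeries.coeff 1 (Dps * PowerSeries.mk f) = f 1 - aL * f 0 := by
  have : Dps * PowerSeries.mk f =
      PowerSeries.mk f - PowerSeries.C aL * (PowerSeries.X * PowerSeries.mk f)
        + PowerSeries.X ^ 2 * PowerSeries.mk f := by
    rw [Dps]; ring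
  rw [this]
  simp [PowerSeries.coeff_C_mul, PowerSeries.coeff_succ_X_mul,
    PowerSeries.coeff_X_pow_mul']

lemma coeff_Dps_mul_zero (f : ℕ → LaurentPolynomial ℚ) :
    PowerSeries.coeff 0 (Dps * PowerSeries.mk f) = f 0 := by
  have : Dps * PowerSeries.mk f =
      PowerSeries.mk f - PowerSeries.C aL * (PowerSeries.X * PowerSeries.mk f)
        + PowerSeries.X ^ 2 * PowerSeries.mk f := by
    rw [Dps]; ring
  rw [this]
  simp

lemma T_mul_sum (c a b : ℤ) :
    T c * ∑ k ∈ Finset.Icc a b, (T k : LaurentPolynomial ℚ) =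
      ∑ k ∈ Finset.Icc (c + a) (c + b), (T k : LaurentPolynomial ℚ) := by
  rw [Finset.mul_sum, ← Finset.map_add_left_Icc, Finset.sum_map]
  simp only [addLeftEmbedding_apply, ← T_add]

lemma Aseq_rec (n : ℕ) : Aseq (n + 2) - aL * Aseq (n + 1) + Aseq n = 0 := by
  have h : aL * Aseq (n + 1) = Aseq (n + 2) + Aseq n := by
    rw [aL, Aseq, add_mul, T_mul_sum, T_mul_sum]
    have h1 : (1 : ℤ) + -(((n:ℤ) + 1)) = -(n:ℤ) := by ring
    have h2 : (1 : ℤ) + ((n:ℤ) + 1) = (n:ℤ) + 2 := by ring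
    have h3 : (-1 : ℤ) + -(((n:ℤ) + 1)) = -((n:ℤ) + 2) := by ring
    have h4 : (-1 : ℤ) + ((n:ℤ) + 1) = (n:ℤ) := by ring
    push_cast
    rw [h1, h2, h3, h4]
    have hu : Finset.Icc (-(n:ℤ)) ((n:ℤ)+2) ∪ Finset.Icc (-((n:ℤ)+2)) (n:ℤ)
        = Finset.Icc (-((n:ℤ)+2)) ((n:ℤ)+2) := by
      ext x; simp only [Finset.mem_union, Finset.mem_Icc]; omega
    have hi : Finset.Icc (-(n:ℤ)) ((n:ℤ)+2) ∩ Finset.Icc (-((n:ℤ)+2)) (n:ℤ)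
        = Finset.Icc (-(n:ℤ)) (n:ℤ) := by
      ext x; simp only [Finset.mem_inter, Finset.mem_Icc]; omega
    rw [← Finset.sum_union_inter, hu, hi, Aseq, Aseq]
    push_cast
    ring
  rw [h]; ring

lemma wseq_rec (n : ℕ) : wseq (n + 3) - aL * wseq (n + 2) + wseq (n + 1) = 0 := by
  rw [wseq, wseq, wseq, aL]
  simp only [Nat.succ_ne_zero, if_neg, Nat.add_eq_zero, and_false, ite_false]
  have p1 : (T 1 : LaurentPolynomial ℚ) * T ((n:ℤ)+2) = T ((n:ℤ)+3) := by
    rw [← T_add]; congr 1; try ring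
  have p2 : (T (-1) : LaurentPolynomial ℚ) * T ((n:ℤ)+2) = T ((n:ℤ)+1) := by
    rw [← T_add]; congr 1; try ring
  have p3 : (T 1 : LaurentPolynomial ℚ) * T (-((n:ℤ)+2)) = T (-((n:ℤ)+1)) := by
    rw [← T_add]; congr 1; try ring
  have p4 : (T (-1) : LaurentPolynomial ℚ) * T (-((n:ℤ)+2)) = T (-((n:ℤ)+3)) := by
    rw [← T_add]; congr 1; try ring
  push_cast
  linear_combination -p1 - p2 - p3 - p4

lemma Aseq_zero : Aseq 0 = 1 := by
  rw [Aseq]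
  norm_num

lemma Aseq_one : Aseq 1 = T (-1) + 1 + T 1 := by
  rw [Aseq]
  have : Finset.Icc (-(1:ℤ)) 1 = {-1, 0, 1} := by decide
  push_cast
  rw [this]
  simp [Finset.sum_insert, T_zero]
  ring

lemma Dps_mul_Aseq : Dps * PowerSeries.mk Aseq = 1 + PowerSeries.X := by
  refine PowerSeries.ext fun n => ?_
  match n with
  | 0 => rw [coeff_Dps_mul_zero, Aseq_zero]; simp
  | 1 => rw [coeff_Dps_mul_one, Aseq_one, Aseq_zero, aL]; simp; ring
  | (n+2) => rw [coeff_Dps_mul, Aseq_rec n]; simp [PowerSeries.coeff_X]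

lemma Dps_mul_wseq : Dps * PowerSeries.mk wseq = 1 - PowerSeries.X ^ 2 := by
  refine PowerSeries.ext fun n => ?_
  match n with
  | 0 => rw [coeff_Dps_mul_zero, wseq]; simp
  | 1 =>
    rw [coeff_Dps_mul_one, wseq, wseq, aL]
    simp [PowerSeries.coeff_X_pow]
  | 2 =>
    rw [coeff_Dps_mul wseq 0, wseq, wseq, wseq, aL]
    norm_num
    have h0 : (T 1 : LaurentPolynomial ℚ) * T (-1) = 1 := by
      rw [← T_add]; norm_num
    have q1 : (T 1 : LaurentPolynomial ℚ) ^ 2 = T 2 := by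
      rw [sq, ← T_add]; norm_num
    have q2 : (T (-1) : LaurentPolynomial ℚ) ^ 2 = T (-2) := by
      rw [sq, ← T_add]; norm_num
    linear_combination -q1 - q2 - 2 * h0
  | (n+3) =>
    rw [coeff_Dps_mul, wseq_rec n]
    simp [PowerSeries.coeff_X_pow]

lemma sum_Icc_neg_eq {M : Type*} [AddCommMonoid M] (d : ℕ) (g : ℤ → M) :
    ∑ x ∈ Finset.Icc (-(d:ℤ)) d, g x =
      ∑ j ∈ Finset.range (d+1), (if j = 0 then g 0 else g j + g (-(j:ℤ))) := by
  induction d with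
  | zero => simp
  | succ d ih =>
    have hs : Finset.Icc (-((d:ℤ)+1)) ((d:ℤ)+1) =
        insert ((d:ℤ)+1) (insert (-((d:ℤ)+1)) (Finset.Icc (-(d:ℤ)) d)) := by
      ext x
      simp only [Finset.mem_Icc, Finset.mem_insert]
      omega
    push_cast
    rw [hs, Finset.sum_insert, Finset.sum_insert, Finset.sum_range_succ, ← ih]
    · push_cast
      abel
    · simp only [Finset.mem_Icc]; omega
    · simp only [Finset.mem_insert, Finset.mem_Icc]; omega

lemma crossL_eq (d : ℕ) :
    crossL d = ∑ j ∈ Finset.range (d+1), wseq j * Aseq (d - j) := by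
  rw [crossL, Finset.sum_filter, Finset.sum_product]
  have step1 : ∀ x ∈ Finset.Icc (-(d:ℤ)) d,
      (∑ y ∈ Finset.Icc (-(d:ℤ)) d,
        if x.natAbs + y.natAbs ≤ d then T (x + y) else 0) =
      T x * Aseq (d - x.natAbs) := by
    intro x hx
    rw [Finset.mem_Icc] at hx
    have hxd : x.natAbs ≤ d := by omega
    have hfil : (Finset.Icc (-(d:ℤ)) d).filter (fun y => x.natAbs + y.natAbs ≤ d)
        = Finset.Icc (-((d - x.natAbs : ℕ) : ℤ)) ((d - x.natAbs : ℕ) : ℤ) := by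
      ext y
      simp only [Finset.mem_filter, Finset.mem_Icc]
      omega
    rw [← Finset.sum_filter, hfil, Aseq, Finset.mul_sum]
    exact Finset.sum_congr rfl fun y _ => by rw [← T_add]
  rw [Finset.sum_congr rfl step1, sum_Icc_neg_eq]
  refine Finset.sum_congr rfl fun j hj => ?_
  rcases Nat.eq_zero_or_pos j with h | h
  · subst h
    simp [wseq, T_zero]
  · have hj0 : j ≠ 0 := by omega
    simp only [hj0, if_false, wseq]
    rw [Int.natAbs_natCast, Int.natAbs_neg, Int.natAbs_natCast]
    ring

lemma mk_crossL : PowerSeries.mk crossL = PowerSeries.mk wseq * PowerSeries.mk Aseq := by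
  refine PowerSeries.ext fun n => ?_
  rw [PowerSeries.coeff_mul, Finset.Nat.sum_antidiagonal_eq_sum_range_succ_mk]
  simp only [PowerSeries.coeff_mk]
  exact crossL_eq n

/-- The refined Ehrhart series `∑_{d ≥ 0} t^d L_d(q)` of the
cross-polytope `Ξ₂` with weight vector `(1,1)` equals
`(1 - t²)(1 + t) / ((1 - qt)² (1 - t/q)²)`, an identity of formal power series in `t` with
Laurent-polynomial coefficients in `q`, stated with the denominator cleared. -/
theorem stmt_15 :
    (1 - PowerSeries.C (T 1 : LaurentPolynomial ℚ) * PowerSeries.X) ^ 2 *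
        (1 - PowerSeries.C (T (-1) : LaurentPolynomial ℚ) * PowerSeries.X) ^ 2 *
        PowerSeries.mk crossL
      = (1 - PowerSeries.X ^ 2) * (1 + PowerSeries.X) := by
  have h0 : (T 1 : LaurentPolynomial ℚ) * T (-1) = 1 := by
    rw [← T_add]; norm_num
  have h1 : (PowerSeries.C (T 1 : LaurentPolynomial ℚ)) *
      PowerSeries.C (T (-1) : LaurentPolynomial ℚ) = 1 := by
    rw [← map_mul, h0, map_one]
  have hD : (1 - PowerSeries.C (T 1 : LaurentPolynomial ℚ) * PowerSeries.X) *
      (1 - PowerSeries.C (T (-1) : LaurentPolynomial ℚ) * PowerSeries.X) = Dps := by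
    rw [Dps, aL, map_add]
    linear_combination (PowerSeries.X : PowerSeries (LaurentPolynomial ℚ)) ^ 2 * h1
  calc (1 - PowerSeries.C (T 1 : LaurentPolynomial ℚ) * PowerSeries.X) ^ 2 *
        (1 - PowerSeries.C (T (-1) : LaurentPolynomial ℚ) * PowerSeries.X) ^ 2 *
        PowerSeries.mk crossL
      = (Dps * PowerSeries.mk wseq) * (Dps * PowerSeries.mk Aseq) := by
        rw [mk_crossL, ← hD]; ring
    _ = (1 - PowerSeries.X ^ 2) * (1 + PowerSeries.X) := by
        rw [Dps_mul_wseq, Dps_mul_Aseq]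
end
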